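/- Let η(·;τ): ℝ → ℝ be a scalar denoiser with parameter τ, extended to noise level σ > 0 by η(y;τ,σ) = σ·η(y/σ;τ). For ε ∈ (0,1] and μ ≥ 0 let ν_{ε,μ} = (1−ε)δ₀ + ε δ_μ and define the risk R(m;τ) = E_{ν_{ε,m}}[(η(X+Z;τ) − X)²] with X ∼ ν_{ε,m}, Z ∼ N(0,1) independent, and for δ > 0 the state evolution map Ψ(m) = (m/δ)·R(μ/√m; τ) for m > 0. Suppose there exists μ* > 0 such that: (i) R is superquadratic on [0,μ*), i.e. R(m;τ) ≥ (m/μ*)²·R(μ*;τ) for all m ∈ [0,μ*); (ii) R(μ*;τ) ≥ δ; and (iii) δ ≥ ε. Then, setting m_fp = (μ/μ*)², for every m ≥ m_fp one has Ψ(m) ≥ m_fp. In particular, if m_fp < m₀ = ε μ², then the state evolution sequence m_{t+1} = Ψ(m_t) started at m₀ satisfies m_t ≥ m_fp > 0 for all t ≥ 0. -/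

import Mathlib

open MeasureTheory ProbabilityTheory ENNReal

noncomputable section

/-- **Superquadratic risk implies non-convergence of state evolution.**
Let `η` be a scalar denoiser (at a fixed tuning `τ`, extended to noise level
`σ` by `η(y;τ,σ) = σ η(y/σ;τ)`), let `ν_{ε,m} = (1−ε)δ₀ + εδ_m`, and let
`R(m) = E_{ν_{ε,m}}[(η(X+Z) − X)²]` be the risk function and
`Ψ(m) = (m/δ)·R(μ/√m)` the state evolution map at undersampling ratio `δ`.
Suppose there is `μ* > 0` such that (i) `R` is superquadratic on `[0,μ*)`,
(ii) `R(μ*) ≥ δ`, and (iii) `δ ≥ ε`.  Then, with `m_fp = (μ/μ*)²`, for every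
`m ≥ m_fp` one has `Ψ(m) ≥ m_fp`; in particular, if `m_fp < m₀ = εμ²`, the
state evolution sequence started at `m₀` satisfies `m_t ≥ m_fp > 0` for all
`t`. -/
theorem superquadratic_nonconvergence
    (η : ℝ → ℝ) (hη : Measurable η)
    (ε δ μ : ℝ) (hε0 : 0 < ε) (hε1 : ε ≤ 1) (hδ : 0 < δ) (hμ : 0 ≤ μ)
    (R : ℝ → ℝ)
    (hR : ∀ m : ℝ, R m =
      ∫ p : ℝ × ℝ, (η (p.1 + p.2) - p.1) ^ 2
        ∂(((ENNReal.ofReal (1 - ε) • Measure.dirac (0 : ℝ) +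
            ENNReal.ofReal ε • Measure.dirac m)).prod (gaussianReal 0 1)))
    (Ψ : ℝ → ℝ) (hΨ : ∀ m : ℝ, Ψ m = (m / δ) * R (μ / Real.sqrt m))
    (μstar : ℝ) (hμstar : 0 < μstar)
    (hsq : ∀ m : ℝ, 0 ≤ m → m < μstar → ((m / μstar) ^ 2) * R μstar ≤ R m)
    (hRδ : δ ≤ R μstar) (hδε : ε ≤ δ) :
    (∀ m : ℝ, (μ / μstar) ^ 2 ≤ m → (μ / μstar) ^ 2 ≤ Ψ m) ∧
    ((μ / μstar) ^ 2 < ε * μ ^ 2 →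
      ∀ ms : ℕ → ℝ, ms 0 = ε * μ ^ 2 → (∀ t : ℕ, ms (t + 1) = Ψ (ms t)) →
        0 < (μ / μstar) ^ 2 ∧ ∀ t : ℕ, (μ / μstar) ^ 2 ≤ ms t) := by

  have hRnonneg : ∀ m : ℝ, 0 ≤ R m := fun m => by
    rw [hR]; exact integral_nonneg fun p => sq_nonneg _
  have main : ∀ m : ℝ, (μ / μstar) ^ 2 ≤ m → (μ / μstar) ^ 2 ≤ Ψ m := by
    intro m hm
    rcases eq_or_lt_of_le hμ with h0 | hμpos
    · have hz : (μ / μstar) ^ 2 = 0 := by rw [← h0]; simp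
      rw [hz] at hm ⊢
      rw [hΨ]
      exact mul_nonneg (div_nonneg hm hδ.le) (hRnonneg _)
    · have hmfp : 0 < (μ / μstar) ^ 2 := by positivity
      have hmpos : 0 < m := lt_of_lt_of_le hmfp hm
      have hsm : 0 < Real.sqrt m := Real.sqrt_pos.mpr hmpos
      set s := μ / Real.sqrt m with hsdef
      have hs0 : 0 ≤ s := div_nonneg hμ hsm.le
      have hs2 : s ^ 2 = μ ^ 2 / m := by
        rw [hsdef, div_pow, Real.sq_sqrt hmpos.le]
      have hm' : μ ^ 2 ≤ m * μstar ^ 2 := by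
        rw [div_pow] at hm
        have := (div_le_iff₀ (by positivity : (0:ℝ) < μstar ^ 2)).mp hm
        linarith
      have hs2le : s ^ 2 ≤ μstar ^ 2 := by
        rw [hs2, div_le_iff₀ hmpos]
        nlinarith
      have hsle : s ≤ μstar := by nlinarith
      rcases lt_or_eq_of_le hsle with hlt | heq
      · have h1 : (s / μstar) ^ 2 * R μstar ≤ R s := hsq s hs0 hlt
        have h2 : (s / μstar) ^ 2 * δ ≤ (s / μstar) ^ 2 * R μstar :=
          mul_le_mul_of_nonneg_left hRδ (sq_nonneg _)
        have h3 : (m / δ) * ((s / μstar) ^ 2 * δ) ≤ Ψ m := by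
          rw [hΨ]
          exact mul_le_mul_of_nonneg_left (h2.trans h1)
            (div_nonneg hmpos.le hδ.le)
        have h4 : (m / δ) * ((s / μstar) ^ 2 * δ) = (μ / μstar) ^ 2 := by
          rw [div_pow s, hs2, div_pow μ]
          field_simp
        linarith
      · have h5 : (m / δ) * δ ≤ (m / δ) * R s := by
          rw [heq]
          exact mul_le_mul_of_nonneg_left hRδ (div_nonneg hmpos.le hδ.le)
        have h6 : (m / δ) * δ = m := div_mul_cancel₀ m (ne_of_gt hδ)
        rw [hΨ, ← hsdef]
        linarith
  refine ⟨main, fun hlt ms h0 hrec => ?_⟩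
  have hμpos : 0 < μ := by
    rcases eq_or_lt_of_le hμ with h | h
    · rw [← h] at hlt
      simp at hlt
    · exact h
  have hmfp : 0 < (μ / μstar) ^ 2 := by positivity
  refine ⟨hmfp, fun t => ?_⟩
  induction t with
  | zero => rw [h0]; exact hlt.le
  | succ n ih => rw [hrec n]; exact main _ ih
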